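/- arXiv:cs/0203002 — 8 statements merged into one kernel-verified Lean document; each statement's English description precedes it below -/
import Mathlib

section
/- Let D be a finite set of defaults such that every default of D has rank zero, i.e., for each (a,b) ∈ D the antecedent a is consistent with D̃. Define the level of a model m as the number of defaults of D that m violates, and define the relation a |~ b to hold iff every model of a whose level is minimal among the levels of models of a satisfies b (vacuously if a has no models). Then a |~ b holds if and only if for every maxbase F of D for a one has F̃, a ⊨ b. -/
open Set

/-- A default is a pair `(a, b)` of formulas, a formula being a set of models. -/
abbrev Default (M : Type*) := Set M × Set M

variable {M : Type*}

/-- The model `m` violates the default `d = (a, b)` iff `m ∈ a \ b`. -/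
def Violates (m : M) (d : Default M) : Prop := m ∈ d.1 \ d.2

/-- The formula `c` is consistent with `B̃`, the set of material counterparts of the
defaults in `B`, iff `c ∩ ⋂ B̃ ≠ ∅`. -/
def ConsistentWith (c : Set M) (B : Set (Default M)) : Prop :=
  (c ∩ ⋂ d ∈ B, (d.1ᶜ ∪ d.2)).Nonempty

/-- `B̃, c ⊨ d` : every model of `c` together with all material counterparts of `B`
is a model of `d`. -/
def EntailsWith (B : Set (Default M)) (c d : Set M) : Prop :=
  c ∩ ⋂ e ∈ B, (e.1ᶜ ∪ e.2) ⊆ d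

/-- The level of the model `m` : the number of defaults of `D` violated by `m`. -/
noncomputable def level (D : Set (Default M)) (m : M) : ℕ :=
  {d ∈ D | Violates m d}.ncard

/-- `F` is a maxbase of `D` for `c` : `F ⊆ D`, `c` is consistent with `F̃`, and no
subset of `D` of strictly larger cardinality has its material counterparts
consistent with `c`. -/
def Maxbase (D : Set (Default M)) (c : Set M) (F : Set (Default M)) : Prop :=
  F ⊆ D ∧ ConsistentWith c F ∧
    ∀ F' : Set (Default M), F' ⊆ D → F.ncard < F'.ncard → ¬ ConsistentWith c F'

/-- **Theorem 1.** If every default of the finite set `D` has rank zero (its antecedent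
is consistent with `D̃`), then the consequence relation defined by ranking models by the
number of defaults they violate is characterized by:
`a |~ b` iff for every maxbase `F` of `D` for `a`, `F̃, a ⊨ b`. -/
theorem lex_rank_zero_maxbase_characterization
    (D : Set (Default M)) (hD : D.Finite)
    (hrank0 : ∀ d ∈ D, ConsistentWith d.1 D) (a b : Set M) :
    (∀ m ∈ a, (∀ m' ∈ a, level D m ≤ level D m') → m ∈ b) ↔
      ∀ F : Set (Default M), Maxbase D a F → EntailsWith F a b := by

  classical
  set sat : M → Set (Default M) := fun m => {d ∈ D | m ∈ d.1ᶜ ∪ d.2} with hsat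
  have hsatsub : ∀ m, sat m ⊆ D := fun m d hd => hd.1
  have hsatfin : ∀ m, (sat m).Finite := fun m => hD.subset (hsatsub m)
  have hmemsat : ∀ m, m ∈ ⋂ d ∈ sat m, (d.1ᶜ ∪ d.2) := by
    intro m
    simp only [Set.mem_iInter]
    intro d hd
    exact hd.2
  have hsub_sat : ∀ (m : M) (F : Set (Default M)), F ⊆ D →
      m ∈ ⋂ d ∈ F, (d.1ᶜ ∪ d.2) → F ⊆ sat m := by
    intro m F hFD hm d hd
    exact ⟨hFD hd, Set.mem_iInter₂.mp hm d hd⟩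
  have hlevel : ∀ m, level D m + (sat m).ncard = D.ncard := by
    intro m
    have hunion : {d ∈ D | Violates m d} ∪ sat m = D := by
      ext d
      simp only [Set.mem_union, Set.mem_setOf_eq, hsat, Violates, Set.mem_diff,
        Set.mem_compl_iff]
      tauto
    have hdisj : Disjoint {d ∈ D | Violates m d} (sat m) := by
      rw [Set.disjoint_left]
      intro d hd hd'
      rcases hd'.2 with h | h
      · exact h hd.2.1
      · exact hd.2.2 h
    have := Set.ncard_union_eq hdisj (hD.subset (fun d hd => hd.1)) (hsatfin m)
    rw [hunion] at this
    rw [level, ← this]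
  constructor
  · intro h F hF m hm
    have hFm : F ⊆ sat m := hsub_sat m F hF.1 hm.2
    have hFle : F.ncard ≤ (sat m).ncard := Set.ncard_le_ncard hFm (hsatfin m)
    have hle : (sat m).ncard ≤ F.ncard := by
      by_contra hc
      exact hF.2.2 (sat m) (hsatsub m) (lt_of_not_ge hc) ⟨m, hm.1, hmemsat m⟩
    refine h m hm.1 ?_
    intro m' hm'
    have h1 : (sat m').ncard ≤ F.ncard := by
      by_contra hc
      exact hF.2.2 (sat m') (hsatsub m') (lt_of_not_ge hc) ⟨m', hm', hmemsat m'⟩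
    have e1 := hlevel m
    have e2 := hlevel m'
    omega
  · intro h m hma hmin
    have hmb : Maxbase D a (sat m) := by
      refine ⟨hsatsub m, ⟨m, hma, hmemsat m⟩, ?_⟩
      rintro F' hF'D hlt ⟨m', hm'a, hm'F⟩
      have hsub : F' ⊆ sat m' := hsub_sat m' F' hF'D hm'F
      have h1 : F'.ncard ≤ (sat m').ncard := Set.ncard_le_ncard hsub (hsatfin m')
      have h2 := hmin m' hm'a
      have e1 := hlevel m
      have e2 := hlevel m'
      omega
    exact h (sat m) hmb ⟨hma, hmemsat m⟩
end

section
/- Let D be a finite set of defaults. Define the level of a model m as the number of defaults of D that m violates, and define the relation a |~ b to hold iff every model of a whose level is minimal among the levels of models of a satisfies b (vacuously if a has no models). Then |~ satisfies rational monotonicity: whenever a |~ b and it is not the case that a |~ cᶜ, also a ∩ c |~ b. -/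
open Set

variable {M : Type*}

/-- Rational monotonicity of the consequence relation defined by ranking models by the
number of defaults of `D` they violate. -/
theorem level_relation_rational_monotonicity
    (D : Set (Default M)) (hD : D.Finite) (a b c : Set M)
    (hab : ∀ m ∈ a, (∀ m' ∈ a, level D m ≤ level D m') → m ∈ b)
    (hnc : ¬ ∀ m ∈ a, (∀ m' ∈ a, level D m ≤ level D m') → m ∈ cᶜ) :
    ∀ m ∈ a ∩ c, (∀ m' ∈ a ∩ c, level D m ≤ level D m') → m ∈ b := by
  push_neg at hnc
  obtain ⟨m₀, hm₀a, hm₀min, hm₀c⟩ := hnc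
  rw [Set.notMem_compl_iff] at hm₀c
  intro m hm hmin
  exact hab m hm.1 fun m' hm' =>
    le_trans (hmin m₀ ⟨hm₀a, hm₀c⟩) (hm₀min m' hm')
end

section
/- Let D be a finite set of defaults with n = |D|, and define the level of a model m as the number of defaults of D that m violates. If a formula a is satisfied by some model of level i, then there exists a maxbase of D for a, and every maxbase of D for a has cardinality at least n − i. -/
open Set

variable {M : Type*}

/-- If `a` is satisfied by some model of level `i`, then there is a maxbase of `D` for
`a`, and every maxbase of `D` for `a` has cardinality at least `n - i`, `n = |D|`. -/
theorem maxbase_exists_of_model_of_level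
    (D : Set (Default M)) (hD : D.Finite) (a : Set M) (i : ℕ)
    (h : ∃ m ∈ a, level D m = i) :
    (∃ F : Set (Default M), Maxbase D a F) ∧
      ∀ F : Set (Default M), Maxbase D a F → D.ncard - i ≤ F.ncard := by
  obtain ⟨m, hma, hlev⟩ := h
  set F0 : Set (Default M) := {d ∈ D | ¬ Violates m d} with hF0def
  have hF0D : F0 ⊆ D := fun d hd => hd.1
  have hcon0 : ConsistentWith a F0 := by
    refine ⟨m, hma, ?_⟩
    simp only [mem_iInter]
    rintro d ⟨_, hv⟩
    by_cases h1 : m ∈ d.1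
    · right; by_contra h2; exact hv ⟨h1, h2⟩
    · left; exact h1
  have hcard0 : F0.ncard = D.ncard - i := by
    have hVD : {d ∈ D | Violates m d} ⊆ D := fun d hd => hd.1
    have heq : F0 = D \ {d ∈ D | Violates m d} := by
      ext d; simp only [hF0def, mem_diff, mem_setOf_eq]; tauto
    rw [heq, Set.ncard_diff hVD (hD.subset hVD), ← hlev]; rfl
  have hsfin : {F : Set (Default M) | F ⊆ D ∧ ConsistentWith a F}.Finite :=
    hD.finite_subsets.subset (fun F hF => hF.1)
  have hsne : {F : Set (Default M) | F ⊆ D ∧ ConsistentWith a F}.Nonempty :=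
    ⟨F0, hF0D, hcon0⟩
  obtain ⟨F, hFs, hFmax⟩ := hsfin.exists_maximalFor Set.ncard _ hsne
  constructor
  · refine ⟨F, hFs.1, hFs.2, fun F' hF'D hlt hcon' => ?_⟩
    exact absurd (hFmax (j := F') ⟨hF'D, hcon'⟩ hlt.le) (not_le.mpr hlt)
  · rintro G ⟨hGD, hGcon, hGmax⟩
    rw [← hcard0]
    by_contra hlt
    exact hGmax F0 hF0D (lt_of_not_ge hlt) hcon0
end

section
/- Let D be a finite set of defaults with n = |D|, and define the level of a model m as the number of defaults of D that m violates. If F is a maxbase of D for a formula a and F has cardinality k, then there is a model of level n − k that satisfies a, and no model of level strictly smaller than n − k satisfies a. -/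
open Set

variable {M : Type*}

lemma ncard_sep_add_ncard_sep_not {α : Type*} (s : Set α) (hs : s.Finite) (P : α → Prop) :
    {x ∈ s | P x}.ncard + {x ∈ s | ¬ P x}.ncard = s.ncard := by
  classical
  have hdisj : Disjoint {x ∈ s | P x} {x ∈ s | ¬ P x} := by
    rw [Set.disjoint_left]; rintro x ⟨_, h⟩ ⟨_, h'⟩; exact h' h
  rw [← Set.ncard_union_eq hdisj (hs.subset (Set.sep_subset _ _))
    (hs.subset (Set.sep_subset _ _))]
  congr 1
  ext x; by_cases h : P x <;> simp [h]

/-- If `F` is a maxbase of `D` for `a` of cardinality `k`, then some model of level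
`n - k` satisfies `a` (`n = |D|`), and no model of strictly smaller level satisfies `a`. -/
theorem model_level_of_maxbase
    (D : Set (Default M)) (hD : D.Finite) (a : Set M)
    (F : Set (Default M)) (k : ℕ) (hF : Maxbase D a F) (hk : F.ncard = k) :
    (∃ m ∈ a, level D m = D.ncard - k) ∧
      ∀ m ∈ a, D.ncard - k ≤ level D m := by
  classical
  obtain ⟨hFD, ⟨m0, hm0a, hm0i⟩, hmax⟩ := hF
  set G : M → Set (Default M) := fun m => {d ∈ D | ¬ Violates m d} with hG
  have hGfin : ∀ m, (G m).Finite := fun m => hD.subset (Set.sep_subset _ _)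
  have hGle : ∀ m ∈ a, (G m).ncard ≤ k := by
    intro m hm
    by_contra h
    push_neg at h
    refine hmax (G m) (Set.sep_subset _ _) (by omega) ⟨m, hm, ?_⟩
    simp only [Set.mem_iInter]
    rintro d ⟨hdD, hdv⟩
    by_cases hd1 : m ∈ d.1
    · right
      by_contra hd2
      exact hdv ⟨hd1, hd2⟩
    · exact Or.inl hd1
  have hlev : ∀ m, level D m + (G m).ncard = D.ncard := by
    intro m
    simpa [level, hG] using ncard_sep_add_ncard_sep_not D hD (fun d => Violates m d)
  constructor
  · refine ⟨m0, hm0a, ?_⟩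
    have hsub : F ⊆ G m0 := by
      intro d hd
      refine ⟨hFD hd, ?_⟩
      have : m0 ∈ d.1ᶜ ∪ d.2 := by
        simp only [Set.mem_iInter] at hm0i
        exact hm0i d hd
      rintro ⟨h1, h2⟩
      rcases this with h | h
      · exact h h1
      · exact h2 h
    have h1 : k ≤ (G m0).ncard := hk ▸ Set.ncard_le_ncard hsub (hGfin m0)
    have h2 := hGle m0 hm0a
    have := hlev m0
    omega
  · intro m hm
    have := hlev m
    have := hGle m hm
    omega
end

section
/- Let D be a finite set of defaults and suppose the formula a has a finite rank with respect to D. Then the pair (a,b) belongs to the rational closure of D if and only if every model of a that is ≪-minimal among the models of a (comparing models m by the relation V(m) ≪ V(m'), where V(m) is the set of defaults of D violated by m) satisfies b. -/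
open Set

variable {M : Type*}

/-- `E₀ = D`, `E_{i+1} = {(a,b) ∈ E_i | a is not consistent with Ẽ_i}`. -/
def Ee (D : Set (Default M)) : ℕ → Set (Default M)
  | 0 => D
  | (i + 1) => {d ∈ Ee D i | ¬ ConsistentWith d.1 (Ee D i)}

/-- `c` has rank `i` with respect to `D` : `i` is the least natural number such that
`c` is consistent with `Ẽ_i`. -/
def HasRank (D : Set (Default M)) (c : Set M) (i : ℕ) : Prop :=
  ConsistentWith c (Ee D i) ∧ ∀ j < i, ¬ ConsistentWith c (Ee D j)

/-- `D_i = E_i \ E_{i+1}`. -/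
def Dlev (D : Set (Default M)) (i : ℕ) : Set (Default M) := Ee D i \ Ee D (i + 1)

/-- `D_∞ = ⋂_i E_i`. -/
def Dinf (D : Set (Default M)) : Set (Default M) := ⋂ i, Ee D i

/-- `k` is the order of `D` : the least `k` such that `D_i = ∅` for every finite `i ≥ k`. -/
def IsOrder (D : Set (Default M)) (k : ℕ) : Prop :=
  (∀ i, k ≤ i → Dlev D i = ∅) ∧ ∀ k', (∀ i, k' ≤ i → Dlev D i = ∅) → k ≤ k'

/-- The `(k+1)`-tuple associated to `X ⊆ D` : `n₀ = |D_∞ ∩ X|` and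
`n_i = |D_{k-i} ∩ X|` for `1 ≤ i ≤ k`. -/
noncomputable def tup (D : Set (Default M)) (k : ℕ) (X : Set (Default M)) (i : ℕ) : ℕ :=
  if i = 0 then (Dinf D ∩ X).ncard else (Dlev D (k - i) ∩ X).ncard

/-- The seriousness ordering : `X ≺ Y` iff the tuple of `X` is lexicographically
smaller than the tuple of `Y`. -/
def Serious (D : Set (Default M)) (k : ℕ) (X Y : Set (Default M)) : Prop :=
  ∃ j ≤ k, (∀ i < j, tup D k X i = tup D k Y i) ∧ tup D k X j < tup D k Y j

/-- `V(m)` : the set of defaults of `D` violated by the model `m`. -/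
def Vset (D : Set (Default M)) (m : M) : Set (Default M) := {d ∈ D | Violates m d}

/-- The lexicographic closure `D^l` : `(a,b) ∈ D^l` iff every model of `a` that is
`≺`-minimal among the models of `a` satisfies `b` (models being compared via the
seriousness ordering of the sets of defaults they violate). -/
def LexClos (D : Set (Default M)) (k : ℕ) (a b : Set M) : Prop :=
  ∀ m ∈ a, (∀ m' ∈ a, ¬ Serious D k (Vset D m') (Vset D m)) → m ∈ b

/-- `B` is a basis for `a` : `B ⊆ D`, `a` is consistent with `B̃`, and there is no
`B' ⊆ D` whose material counterparts are consistent with `a` and with `B ≺ B'`. -/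
def LexBasis (D : Set (Default M)) (k : ℕ) (a : Set M) (B : Set (Default M)) : Prop :=
  B ⊆ D ∧ ConsistentWith a B ∧
    ∀ B' : Set (Default M), B' ⊆ D → ConsistentWith a B' → ¬ Serious D k B B'

/-- The rational closure of `D` : the pairs `(a,b)` such that either `a` has no rank,
or the rank of `a` is strictly smaller than the rank of `a ∩ bᶜ` (where `no rank`
counts as larger than every natural number). -/
def RatClos (D : Set (Default M)) (a b : Set M) : Prop :=
  (¬ ∃ i, HasRank D a i) ∨
    ∃ i, HasRank D a i ∧
      ((¬ ∃ j, HasRank D (a ∩ bᶜ) j) ∨ ∃ j, HasRank D (a ∩ bᶜ) j ∧ i < j)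

/-- `ℓ(X) = l` : `l` is the least index `i ≤ k` with `tup X i ≠ 0`, and `l = k + 1`
if the tuple of `X` is all zero. -/
def EllIs (D : Set (Default M)) (k : ℕ) (X : Set (Default M)) (l : ℕ) : Prop :=
  (l ≤ k ∧ tup D k X l ≠ 0 ∧ ∀ i < l, tup D k X i = 0) ∨
    (l = k + 1 ∧ ∀ i ≤ k, tup D k X i = 0)

/-- `X ≪ Y` iff `ℓ(X) > ℓ(Y)`. -/
def Ll (D : Set (Default M)) (k : ℕ) (X Y : Set (Default M)) : Prop :=
  ∃ lx ly, EllIs D k X lx ∧ EllIs D k Y ly ∧ ly < lx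

section Aux

lemma Ee_succ_subset (D : Set (Default M)) (i : ℕ) : Ee D (i+1) ⊆ Ee D i :=
  fun _ hd => hd.1

lemma Ee_antitone (D : Set (Default M)) {i j : ℕ} (h : i ≤ j) : Ee D j ⊆ Ee D i := by
  induction j with
  | zero => simp_all
  | succ n ih =>
    rcases Nat.lt_or_ge i (n+1) with h' | h'
    · exact (Ee_succ_subset D n).trans (ih (Nat.lt_succ_iff.mp h'))
    · have : i = n+1 := le_antisymm h h'
      subst this; exact subset_rfl

lemma Ee_subset (D : Set (Default M)) (i : ℕ) : Ee D i ⊆ D :=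
  Ee_antitone D (Nat.zero_le i)

lemma Dinf_subset (D : Set (Default M)) : Dinf D ⊆ D := iInter_subset _ 0

lemma consistentWith_mono {c : Set M} {B B' : Set (Default M)} (h : B' ⊆ B)
    (hc : ConsistentWith c B) : ConsistentWith c B' := by
  obtain ⟨m, hm, hm2⟩ := hc
  refine ⟨m, hm, ?_⟩
  simp only [mem_iInter] at hm2 ⊢
  exact fun d hd => hm2 d (h hd)

lemma Ee_stab {D : Set (Default M)} {k : ℕ} (hk : ∀ i, k ≤ i → Dlev D i = ∅) :
    ∀ i, k ≤ i → Ee D i = Ee D k := by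
  intro i hi
  induction i with
  | zero => have : k = 0 := Nat.le_zero.mp hi; subst this; rfl
  | succ n ih =>
    rcases Nat.lt_or_ge k (n+1) with h' | h'
    · have hkn : k ≤ n := Nat.lt_succ_iff.mp h'
      have h1 : Ee D n ⊆ Ee D (n+1) := diff_eq_empty.mp (hk n hkn)
      have h2 : Ee D (n+1) = Ee D n := subset_antisymm (Ee_succ_subset D n) h1
      rw [h2]; exact ih hkn
    · have : k = n+1 := le_antisymm hi h'
      subst this; rfl

lemma Dinf_eq {D : Set (Default M)} {k : ℕ} (hk : ∀ i, k ≤ i → Dlev D i = ∅) :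
    Dinf D = Ee D k := by
  apply subset_antisymm
  · exact iInter_subset _ k
  · intro x hx
    refine mem_iInter.mpr fun i => ?_
    rcases le_or_gt k i with h | h
    · rw [Ee_stab hk i h]; exact hx
    · exact Ee_antitone D h.le hx

lemma mem_material_iff {m : M} {d : Default M} : m ∈ d.1ᶜ ∪ d.2 ↔ ¬ Violates m d := by
  simp only [Violates, mem_union, mem_compl_iff, mem_diff]
  tauto

lemma Vset_subset (D : Set (Default M)) (m : M) : Vset D m ⊆ D := fun _ hd => hd.1

lemma consistentWith_iff {D : Set (Default M)} {c : Set M} {B : Set (Default M)}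
    (hB : B ⊆ D) : ConsistentWith c B ↔ ∃ m ∈ c, Vset D m ∩ B = ∅ := by
  constructor
  · rintro ⟨m, hmc, hm⟩
    refine ⟨m, hmc, ?_⟩
    ext d
    simp only [mem_inter_iff, Vset, mem_sep_iff, mem_empty_iff_false, iff_false, not_and]
    rintro ⟨hdD, hv⟩ hdB
    exact (mem_material_iff.mp (mem_iInter₂.mp hm d hdB)) hv
  · rintro ⟨m, hmc, hm⟩
    refine ⟨m, hmc, mem_iInter₂.mpr fun d hd => mem_material_iff.mpr fun hv => ?_⟩
    have : d ∈ Vset D m ∩ B := ⟨⟨hB hd, hv⟩, hd⟩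
    simp [hm] at this

lemma lemQ {D : Set (Default M)} {k : ℕ} (hD : D.Finite)
    (hk : ∀ i, k ≤ i → Dlev D i = ∅) (X : Set (Default M)) :
    ∀ l, 1 ≤ l → l ≤ k + 1 →
      ((∀ i < l, tup D k X i = 0) ↔ X ∩ Ee D (k + 1 - l) = ∅) := by
  intro l
  induction l with
  | zero => omega
  | succ n ih =>
    intro _ h2
    rcases Nat.eq_zero_or_pos n with hn | hn
    · subst hn
      have hfin : (Dinf D ∩ X).Finite := hD.subset fun d hd => Dinf_subset D hd.1
      constructor
      · intro h
        have h0 : (Dinf D ∩ X).ncard = 0 := by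
          simpa only [tup, if_pos rfl, ↓reduceIte] using h 0 Nat.one_pos
        have he : Dinf D ∩ X = ∅ := (ncard_eq_zero hfin).mp h0
        rw [show k + 1 - (0 + 1) = k by omega, ← Dinf_eq hk, inter_comm]
        exact he
      · intro h i hi
        interval_cases i
        have h' : X ∩ Ee D k = ∅ := by
          rw [show k + 1 - (0 + 1) = k by omega] at h
          exact h
        rw [show tup D k X 0 = (Dinf D ∩ X).ncard from if_pos rfl,
          ncard_eq_zero hfin, Dinf_eq hk, inter_comm]
        exact h'
    · have hnk : n ≤ k := by omega
      have hfin : (Dlev D (k - n) ∩ X).Finite :=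
        hD.subset fun d hd => Ee_subset D (k-n) hd.1.1
      have hEsplit : Ee D (k - n) = Dlev D (k - n) ∪ Ee D (k + 1 - n) := by
        simp only [Dlev]
        rw [show k + 1 - n = (k - n) + 1 by omega]
        exact (diff_union_of_subset (Ee_succ_subset D (k-n))).symm
      constructor
      · intro h
        have hq : X ∩ Ee D (k + 1 - n) = ∅ :=
          (ih hn (by omega)).mp (fun i hi => h i (by omega))
        have htn : tup D k X n = 0 := h n (Nat.lt_succ_self n)
        simp only [tup, if_neg (by omega : ¬ n = 0)] at htn
        have hdl : Dlev D (k - n) ∩ X = ∅ := (ncard_eq_zero hfin).mp htn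
        rw [show k + 1 - (n+1) = k - n by omega, hEsplit, inter_union_distrib_left,
          hq, union_empty, inter_comm]
        exact hdl
      · intro h i hi
        rw [show k + 1 - (n+1) = k - n by omega, hEsplit, inter_union_distrib_left,
          union_empty_iff] at h
        rcases Nat.lt_or_ge i n with hin | hin
        · exact (ih hn (by omega)).mpr h.2 i hin
        · obtain rfl : i = n := by omega
          simp only [tup, if_neg (by omega : ¬ i = 0)]
          rw [ncard_eq_zero hfin, inter_comm]
          exact h.1

lemma ellIs_exists {D : Set (Default M)} {k : ℕ} (X : Set (Default M)) :
    ∃ l, EllIs D k X l := by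
  classical
  by_cases h : ∃ i, i ≤ k ∧ tup D k X i ≠ 0
  · obtain ⟨i, hik, hi⟩ := h
    have h' : ∃ i, tup D k X i ≠ 0 := ⟨i, hi⟩
    refine ⟨Nat.find h', Or.inl ⟨le_trans (Nat.find_min' h' hi) hik, Nat.find_spec h',
      fun j hj => not_not.mp (Nat.find_min h' hj)⟩⟩
  · push_neg at h
    exact ⟨k+1, Or.inr ⟨rfl, h⟩⟩

lemma ellIs_le {D : Set (Default M)} {k : ℕ} {X : Set (Default M)} {l : ℕ}
    (h : EllIs D k X l) : l ≤ k + 1 := by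
  rcases h with ⟨hl, _, _⟩ | ⟨hl, _⟩ <;> omega

lemma ellIs_unique {D : Set (Default M)} {k : ℕ} {X : Set (Default M)} {l l' : ℕ}
    (h : EllIs D k X l) (h' : EllIs D k X l') : l = l' := by
  rcases h with ⟨hl, ht, hm⟩ | ⟨hl, hall⟩ <;>
    rcases h' with ⟨hl', ht', hm'⟩ | ⟨hl', hall'⟩
  · rcases lt_trichotomy l l' with hlt | he | hlt
    · exact absurd (hm' l hlt) ht
    · exact he
    · exact absurd (hm l' hlt) ht'
  · exact absurd (hall' l hl) ht
  · exact absurd (hall l' hl') ht'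
  · omega

lemma ellIs_ge_iff {D : Set (Default M)} {k : ℕ} {X : Set (Default M)} {l l₀ : ℕ}
    (h : EllIs D k X l) (h₀ : l₀ ≤ k + 1) :
    (∀ i < l₀, tup D k X i = 0) ↔ l₀ ≤ l := by
  constructor
  · intro hq
    by_contra hlt
    push_neg at hlt
    rcases h with ⟨hl, ht, _⟩ | ⟨hl, _⟩
    · exact ht (hq l hlt)
    · omega
  · intro hle i hi
    rcases h with ⟨_, _, hm⟩ | ⟨hl, hall⟩
    · exact hm i (lt_of_lt_of_le hi hle)
    · exact hall i (by omega)

lemma hasRank_unique {D : Set (Default M)} {c : Set M} {i j : ℕ}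
    (h : HasRank D c i) (h' : HasRank D c j) : i = j := by
  rcases lt_trichotomy i j with hlt | he | hlt
  · exact absurd h.1 (h'.2 i hlt)
  · exact he
  · exact absurd h'.1 (h.2 j hlt)

lemma exists_hasRank {D : Set (Default M)} {c : Set M}
    (h : ∃ j, ConsistentWith c (Ee D j)) : ∃ j, HasRank D c j := by
  classical
  exact ⟨Nat.find h, Nat.find_spec h, fun j hj => Nat.find_min h hj⟩

lemma hasRank_le {D : Set (Default M)} {k : ℕ}
    (hk : ∀ i, k ≤ i → Dlev D i = ∅) {a : Set M} {i : ℕ} (h : HasRank D a i) :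
    i ≤ k := by
  by_contra hik
  push_neg at hik
  have h1 := h.1
  rw [Ee_stab hk i hik.le] at h1
  exact h.2 k hik h1

lemma llMinimal_iff {D : Set (Default M)} {k : ℕ} (hD : D.Finite)
    (hke : ∀ i, k ≤ i → Dlev D i = ∅)
    {a : Set M} {i : ℕ} (hr : HasRank D a i) {m : M} (hm : m ∈ a) :
    (∀ m' ∈ a, ¬ Ll D k (Vset D m') (Vset D m)) ↔ Vset D m ∩ Ee D i = ∅ := by
  have hik : i ≤ k := hasRank_le hke hr
  set l₀ := k + 1 - i with hl₀
  have hl₀1 : 1 ≤ l₀ := by omega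
  have hl₀k : l₀ ≤ k + 1 := by omega
  have hQiff : ∀ m'' : M,
      ((∀ j < l₀, tup D k (Vset D m'') j = 0) ↔ Vset D m'' ∩ Ee D i = ∅) := by
    intro m''
    have := lemQ hD hke (Vset D m'') l₀ hl₀1 hl₀k
    rwa [show k + 1 - l₀ = i by omega] at this
  obtain ⟨lm, hlm⟩ := ellIs_exists (D := D) (k := k) (Vset D m)
  obtain ⟨m₀, hm₀a, hm₀⟩ := (consistentWith_iff (Ee_subset D i)).mp hr.1
  obtain ⟨lm₀, hlm₀⟩ := ellIs_exists (D := D) (k := k) (Vset D m₀)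
  have hlm₀ge : l₀ ≤ lm₀ := (ellIs_ge_iff hlm₀ hl₀k).mp ((hQiff m₀).mpr hm₀)
  constructor
  · intro hmin
    have h1 := hmin m₀ hm₀a
    have h2 : ¬ lm < lm₀ := fun hcon => h1 ⟨lm₀, lm, hlm₀, hlm, hcon⟩
    have hge : l₀ ≤ lm := le_trans hlm₀ge (not_lt.mp h2)
    exact (hQiff m).mp ((ellIs_ge_iff hlm hl₀k).mpr hge)
  · intro hVm m' hm'a hLl
    obtain ⟨lx, ly, hx, hy, hxy⟩ := hLl
    obtain rfl : ly = lm := ellIs_unique hy hlm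
    have hlmge : l₀ ≤ ly := (ellIs_ge_iff hlm hl₀k).mp ((hQiff m).mpr hVm)
    have hlxle : lx ≤ k + 1 := ellIs_le hx
    rcases Nat.eq_zero_or_pos i with hi0 | hi0
    · omega
    · have h₀' : l₀ + 1 ≤ k + 1 := by omega
      have hq' : ∀ j < l₀ + 1, tup D k (Vset D m') j = 0 :=
        (ellIs_ge_iff hx h₀').mpr (by omega)
      have := (lemQ hD hke (Vset D m') (l₀ + 1) (by omega) h₀').mp hq'
      rw [show k + 1 - (l₀ + 1) = i - 1 by omega] at this
      have hcons : ConsistentWith a (Ee D (i-1)) :=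
        (consistentWith_iff (Ee_subset D (i-1))).mpr ⟨m', hm'a, this⟩
      exact hr.2 (i-1) (by omega) hcons

end Aux

/-- A conditional assertion `(a,b)` with `a` of finite rank belongs to the rational
closure of `D` iff it is satisfied by the modular model in which each propositional
model is ranked by the `≪` ordering on the set of defaults it violates. -/
theorem rational_closure_iff_ll_minimal
    (D : Set (Default M)) (hD : D.Finite) (k : ℕ) (hk : IsOrder D k)
    (a b : Set M) (hfin : ∃ i, HasRank D a i) :
    RatClos D a b ↔
      ∀ m ∈ a, (∀ m' ∈ a, ¬ Ll D k (Vset D m') (Vset D m)) → m ∈ b := by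
  obtain ⟨i, hi⟩ := hfin
  have hke := hk.1
  have key : ∀ m ∈ a,
      ((∀ m' ∈ a, ¬ Ll D k (Vset D m') (Vset D m)) ↔ Vset D m ∩ Ee D i = ∅) :=
    fun m hm => llMinimal_iff hD hke hi hm
  have hRHS : (∀ m ∈ a, (∀ m' ∈ a, ¬ Ll D k (Vset D m') (Vset D m)) → m ∈ b)
      ↔ ¬ ConsistentWith (a ∩ bᶜ) (Ee D i) := by
    rw [consistentWith_iff (Ee_subset D i)]
    constructor
    · rintro h ⟨m, ⟨hma, hmb⟩, hV⟩
      exact hmb (h m hma ((key m hma).mpr hV))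
    · intro h m hma hmin
      by_contra hmb
      exact h ⟨m, ⟨hma, hmb⟩, (key m hma).mp hmin⟩
  rw [hRHS]
  unfold RatClos
  constructor
  · rintro (hnr | ⟨i', hi', hcase⟩)
    · exact absurd ⟨i, hi⟩ hnr
    · obtain rfl : i' = i := hasRank_unique hi' hi
      rcases hcase with hnr2 | ⟨j, hj, hij⟩
      · intro hcon
        exact hnr2 (exists_hasRank ⟨i', hcon⟩)
      · exact hj.2 i' hij
  · intro hnc
    right
    refine ⟨i, hi, ?_⟩
    by_cases hex : ∃ j, HasRank D (a ∩ bᶜ) j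
    · obtain ⟨j, hj⟩ := hex
      right
      refine ⟨j, hj, ?_⟩
      by_contra hji
      push_neg at hji
      exact hnc (consistentWith_mono (Ee_antitone D hji) hj.1)
    · exact Or.inl hex
end

section
/- Let D be a finite set of defaults. The lexicographic closure D^l of D satisfies rational monotonicity: whenever (a,b) ∈ D^l and (a, cᶜ) ∉ D^l, also (a ∩ c, b) ∈ D^l. -/
open Set

variable {M : Type*}

lemma serious_trichotomy (D : Set (Default M)) (k : ℕ) (X Y : Set (Default M)) :
    Serious D k X Y ∨ Serious D k Y X ∨ ∀ i ≤ k, tup D k X i = tup D k Y i := by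
  classical
  by_cases h : ∀ i ≤ k, tup D k X i = tup D k Y i
  · exact Or.inr (Or.inr h)
  push_neg at h
  have hP : ∃ i, i ≤ k ∧ tup D k X i ≠ tup D k Y i := h
  obtain ⟨hjk, hne⟩ := Nat.find_spec hP
  set j := Nat.find hP with hj
  have heq : ∀ i < j, tup D k X i = tup D k Y i := by
    intro i hij
    by_contra hne'
    exact Nat.find_min hP hij ⟨le_trans hij.le hjk, hne'⟩
  rcases hne.lt_or_gt with hlt | hlt
  · exact Or.inl ⟨j, hjk, heq, hlt⟩
  · exact Or.inr (Or.inl ⟨j, hjk, fun i hi => (heq i hi).symm, hlt⟩)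

lemma serious_trans {D : Set (Default M)} {k : ℕ} {X Y Z : Set (Default M)}
    (h1 : Serious D k X Y) (h2 : Serious D k Y Z) : Serious D k X Z := by
  obtain ⟨j1, hj1, he1, hl1⟩ := h1
  obtain ⟨j2, hj2, he2, hl2⟩ := h2
  refine ⟨min j1 j2, le_trans (min_le_left _ _) hj1, ?_, ?_⟩
  · intro i hi
    exact (he1 i (lt_of_lt_of_le hi (min_le_left _ _))).trans
      (he2 i (lt_of_lt_of_le hi (min_le_right _ _)))
  · rcases lt_trichotomy j1 j2 with h | h | h
    · rw [min_eq_left h.le]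
      calc tup D k X j1 < tup D k Y j1 := hl1
        _ = tup D k Z j1 := he2 j1 h
    · subst h; rw [min_self]; exact hl1.trans hl2
    · rw [min_eq_right h.le]
      calc tup D k X j2 = tup D k Y j2 := he1 j2 h
        _ < tup D k Z j2 := hl2

/-- The lexicographic closure satisfies rational monotonicity. -/
theorem lexClos_rational_monotonicity
    (D : Set (Default M)) (hD : D.Finite) (k : ℕ) (hk : IsOrder D k)
    (a b c : Set M) (hab : LexClos D k a b) (hnc : ¬ LexClos D k a cᶜ) :
    LexClos D k (a ∩ c) b := by
  unfold LexClos at *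
  push_neg at hnc
  obtain ⟨m₀, hm₀a, hmin₀, hm₀c⟩ := hnc
  intro m hm hmin
  have hm₀ac : m₀ ∈ a ∩ c := ⟨hm₀a, by simpa using hm₀c⟩
  have h1 : ¬ Serious D k (Vset D m₀) (Vset D m) := hmin m₀ hm₀ac
  apply hab m hm.1
  intro m' hm' hS
  refine absurd ?_ (hmin₀ m' hm')
  rcases serious_trichotomy D k (Vset D m₀) (Vset D m) with h | h | h
  · exact absurd h h1
  · exact serious_trans hS h
  · obtain ⟨j, hj, he, hl⟩ := hS
    exact ⟨j, hj, fun i hi => (he i hi).trans (h i (le_of_lt (lt_of_lt_of_le hi hj))).symm,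
      hl.trans_eq (h j hj).symm⟩
end

section
/- Let D be a finite set of defaults. The lexicographic closure D^l of D satisfies the preferential closure conditions: reflexivity ((a,a) ∈ D^l for every formula a); right weakening (if (a,b) ∈ D^l and b ⊆ c then (a,c) ∈ D^l); And (if (a,b) ∈ D^l and (a,c) ∈ D^l then (a, b ∩ c) ∈ D^l); Or (if (a,c) ∈ D^l and (b,c) ∈ D^l then (a ∪ b, c) ∈ D^l); and cautious monotonicity (if (a,b) ∈ D^l and (a,c) ∈ D^l then (a ∩ b, c) ∈ D^l). -/
open Set

variable {M : Type*}

/-- The lexicographic closure satisfies the preferential closure conditions: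
reflexivity, right weakening, And, Or, and cautious monotonicity. -/
theorem lexClos_preferential
    (D : Set (Default M)) (hD : D.Finite) (k : ℕ) (hk : IsOrder D k) :
    (∀ a : Set M, LexClos D k a a) ∧
      (∀ a b c : Set M, LexClos D k a b → b ⊆ c → LexClos D k a c) ∧
      (∀ a b c : Set M, LexClos D k a b → LexClos D k a c → LexClos D k a (b ∩ c)) ∧
      (∀ a b c : Set M, LexClos D k a c → LexClos D k b c → LexClos D k (a ∪ b) c) ∧
      (∀ a b c : Set M, LexClos D k a b → LexClos D k a c → LexClos D k (a ∩ b) c) := by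
  classical
  -- tuple map into lexicographic order on `Fin (k+1) → ℕ`
  set T : M → Lex (Fin (k + 1) → ℕ) :=
    fun m => toLex (fun i => tup D k (Vset D m) i.val) with hT
  have hSer : ∀ m m' : M,
      Serious D k (Vset D m) (Vset D m') ↔ T m < T m' := by
    intro m m'
    constructor
    · rintro ⟨j, hjk, hpre, hlt⟩
      refine ⟨⟨j, Nat.lt_succ_of_le hjk⟩, ?_, hlt⟩
      intro i hi
      exact hpre i.val hi
    · rintro ⟨i, hpre, hlt⟩
      refine ⟨i.val, Nat.lt_succ_iff.mp i.isLt, ?_, hlt⟩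
      intro j hj
      exact hpre ⟨j, lt_trans hj i.isLt⟩ hj
  have hwf : WellFounded (fun m m' : M => T m < T m') :=
    InvImage.wf T (IsWellFounded.wf (α := Lex (Fin (k + 1) → ℕ)) (r := (· < ·)))
  -- existence of a minimal model in any nonempty set
  have hmin : ∀ s : Set M, s.Nonempty → ∃ m₀ ∈ s, ∀ m' ∈ s, ¬ T m' < T m₀ := by
    intro s hs
    obtain ⟨m₀, hm₀, hmin⟩ := hwf.has_min s hs
    exact ⟨m₀, hm₀, hmin⟩
  refine ⟨?_, ?_, ?_, ?_, ?_⟩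
  · intro a m hm _; exact hm
  · intro a b c hab hbc m hm hminm
    exact hbc (hab m hm hminm)
  · intro a b c hab hac m hm hminm
    exact ⟨hab m hm hminm, hac m hm hminm⟩
  · intro a b c hac hbc m hm hminm
    rcases hm with hma | hmb
    · exact hac m hma fun m' hm' => hminm m' (Or.inl hm')
    · exact hbc m hmb fun m' hm' => hminm m' (Or.inr hm')
  · intro a b c hab hac m hm hminm
    obtain ⟨m₀, hm₀a, hm₀min⟩ := hmin a ⟨m, hm.1⟩
    have hm₀minS : ∀ m' ∈ a, ¬ Serious D k (Vset D m') (Vset D m₀) := by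
      intro m' hm' hS
      exact hm₀min m' hm' ((hSer m' m₀).mp hS)
    have hm₀b : m₀ ∈ b := hab m₀ hm₀a hm₀minS
    have h1 : ¬ T m₀ < T m := by
      intro hlt
      exact hminm m₀ ⟨hm₀a, hm₀b⟩ ((hSer m₀ m).mpr hlt)
    have h2 : ¬ T m < T m₀ := hm₀min m hm.1
    have tri := (Pi.isTrichotomous_lex (β := fun _ : Fin (k + 1) => ℕ) (· < ·)
      (@fun _ => (· < ·)) (IsWellFounded.wf)).trichotomous
    have heq : T m = T m₀ := by
      exact tri (T m) (T m₀) h2 h1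
    have : ∀ m' ∈ a, ¬ Serious D k (Vset D m') (Vset D m) := by
      intro m' hm' hS
      exact hm₀min m' hm' (heq ▸ (hSer m' m).mp hS)
    exact hac m hm.1 this
end

section
/- Let a and b be formulas and let |~ be the consequence relation defined by the two-level modular model of the single default (a,b): a model is at the bottom level iff it satisfies the material implication aᶜ ∪ b, and at the top level otherwise; c |~ d iff every model of c at the lowest level containing a model of c satisfies d. Then |~ satisfies rational monotonicity: whenever c |~ d and it is not the case that c |~ eᶜ, also c ∩ e |~ d. -/
open Set Classical in
/-- The consequence relation of the two-level modular model of the single default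
`(a, b)` (bottom level: models of the material implication `aᶜ ∪ b`; top level: the
rest) satisfies rational monotonicity. -/
theorem single_default_rational_monotonicity {M : Type*} (a b c d e : Set M)
    (hcd : ∀ m ∈ c,
      (∀ m' ∈ c, (if m ∈ aᶜ ∪ b then (0 : ℕ) else 1) ≤
        (if m' ∈ aᶜ ∪ b then (0 : ℕ) else 1)) → m ∈ d)
    (hne : ¬ ∀ m ∈ c,
      (∀ m' ∈ c, (if m ∈ aᶜ ∪ b then (0 : ℕ) else 1) ≤
        (if m' ∈ aᶜ ∪ b then (0 : ℕ) else 1)) → m ∈ eᶜ) :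
    ∀ m ∈ c ∩ e,
      (∀ m' ∈ c ∩ e, (if m ∈ aᶜ ∪ b then (0 : ℕ) else 1) ≤
        (if m' ∈ aᶜ ∪ b then (0 : ℕ) else 1)) → m ∈ d := by
  push_neg at hne
  obtain ⟨m₀, hm₀c, hmin, hm₀e⟩ := hne
  simp only [mem_compl_iff, not_not] at hm₀e
  intro m hm hminm
  apply hcd m hm.1
  intro m' hm'
  exact le_trans (hminm m₀ ⟨hm₀c, hm₀e⟩) (hmin m' hm')
end
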